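/- Let T ∈ R_+^{m1×⋯×md} be nonnegative and t > 1. Then ‖T^{∘t}‖_∞ ≤ ‖T‖_{ℓ∞}^{t−1} ‖T‖_∞, and hence ‖T^{∘t}‖_∞^{1/t} ≤ ‖T‖_∞, i.e., s ↦ ‖T^{∘s}‖_∞^{1/s} is nonincreasing on (0,∞). -/
import Mathlib


/-- The multilinear form `T × (x₁ ⊗ ⋯ ⊗ x_d)` of a real `d`-tensor of shape `m`. -/
noncomputable def tform {d : ℕ} {m : Fin d → ℕ}
    (T : ((i : Fin d) → Fin (m i)) → ℝ) (x : (i : Fin d) → Fin (m i) → ℝ) : ℝ :=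
  ∑ idx : (i : Fin d) → Fin (m i), T idx * ∏ i, x i (idx i)

/-- Spectral norm of a nonnegative tensor. -/
noncomputable def specNorm {d : ℕ} {m : Fin d → ℕ}
    (T : ((i : Fin d) → Fin (m i)) → ℝ) : ℝ :=
  sSup {r | ∃ x : (i : Fin d) → Fin (m i) → ℝ,
    (∀ i j, 0 ≤ x i j) ∧ (∀ i, ∑ j, (x i j) ^ 2 = 1) ∧ r = tform T x}

/-- The maximal entry (`ℓ∞` norm) of a nonnegative tensor. -/
noncomputable def linfNorm {d : ℕ} {m : Fin d → ℕ}
    (T : ((i : Fin d) → Fin (m i)) → ℝ) : ℝ :=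
  ⨆ idx : (i : Fin d) → Fin (m i), T idx

section helpers
variable {d : ℕ} {m : Fin d → ℕ}

def specSet (T : ((i : Fin d) → Fin (m i)) → ℝ) : Set ℝ :=
  {r | ∃ x : (i : Fin d) → Fin (m i) → ℝ,
    (∀ i j, 0 ≤ x i j) ∧ (∀ i, ∑ j, (x i j) ^ 2 = 1) ∧ r = tform T x}

lemma specNorm_eq (T : ((i : Fin d) → Fin (m i)) → ℝ) : specNorm T = sSup (specSet T) := rfl

lemma specSet_bddAbove (T : ((i : Fin d) → Fin (m i)) → ℝ) (hT : ∀ idx, 0 ≤ T idx) :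
    BddAbove (specSet T) := by
  refine ⟨∑ idx, T idx, ?_⟩
  rintro r ⟨x, hx0, hx1, rfl⟩
  have hxle : ∀ i j, x i j ≤ 1 := by
    intro i j
    nlinarith [hx1 i, Finset.single_le_sum (f := fun j => (x i j)^2)
      (fun j _ => sq_nonneg (x i j)) (Finset.mem_univ j), hx0 i j, sq_nonneg (x i j - 1)]
  refine Finset.sum_le_sum fun idx _ => ?_
  calc T idx * ∏ i, x i (idx i) ≤ T idx * 1 := by
        refine mul_le_mul_of_nonneg_left ?_ (hT idx)
        exact Finset.prod_le_one (fun i _ => hx0 i (idx i)) (fun i _ => hxle i (idx i))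
    _ = T idx := mul_one _

lemma entry_mem_specSet (hm : ∀ i, 0 < m i) (T : ((i : Fin d) → Fin (m i)) → ℝ)
    (idx : (i : Fin d) → Fin (m i)) : T idx ∈ specSet T := by
  refine ⟨fun i j => if j = idx i then 1 else 0, fun i j => by positivity, fun i => by simp, ?_⟩
  have hprod : ∀ idx' : (i : Fin d) → Fin (m i),
      (∏ i, (if idx' i = idx i then (1:ℝ) else 0)) = if idx' = idx then 1 else 0 := by
    intro idx'
    by_cases h : idx' = idx
    · simp [h]
    · obtain ⟨i, hi⟩ := Function.ne_iff.mp h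
      rw [if_neg h]
      exact Finset.prod_eq_zero (Finset.mem_univ i) (by simp [hi])
  simp only [tform, hprod, mul_ite, mul_one, mul_zero]
  simp

lemma specSet_nonempty (hm : ∀ i, 0 < m i) (T : ((i : Fin d) → Fin (m i)) → ℝ) :
    (specSet T).Nonempty :=
  ⟨T (fun i => ⟨0, hm i⟩), entry_mem_specSet hm T _⟩

lemma entry_le_specNorm (hm : ∀ i, 0 < m i) (T : ((i : Fin d) → Fin (m i)) → ℝ)
    (hT : ∀ idx, 0 ≤ T idx) (idx : (i : Fin d) → Fin (m i)) : T idx ≤ specNorm T :=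
  le_csSup (specSet_bddAbove T hT) (entry_mem_specSet hm T idx)

lemma specNorm_nonneg (hm : ∀ i, 0 < m i) (T : ((i : Fin d) → Fin (m i)) → ℝ)
    (hT : ∀ idx, 0 ≤ T idx) : 0 ≤ specNorm T :=
  le_trans (hT _) (entry_le_specNorm hm T hT (fun i => ⟨0, hm i⟩))

lemma linfNorm_le_specNorm (hm : ∀ i, 0 < m i) (T : ((i : Fin d) → Fin (m i)) → ℝ)
    (hT : ∀ idx, 0 ≤ T idx) : linfNorm T ≤ specNorm T := by
  have : Nonempty ((i : Fin d) → Fin (m i)) := ⟨fun i => ⟨0, hm i⟩⟩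
  exact ciSup_le (entry_le_specNorm hm T hT)

lemma entry_le_linfNorm (hm : ∀ i, 0 < m i) (T : ((i : Fin d) → Fin (m i)) → ℝ)
    (idx : (i : Fin d) → Fin (m i)) : T idx ≤ linfNorm T := by
  have : Nonempty ((i : Fin d) → Fin (m i)) := ⟨fun i => ⟨0, hm i⟩⟩
  exact le_ciSup (Set.Finite.bddAbove (Set.finite_range T)) idx

lemma linfNorm_nonneg (hm : ∀ i, 0 < m i) (T : ((i : Fin d) → Fin (m i)) → ℝ)
    (hT : ∀ idx, 0 ≤ T idx) : 0 ≤ linfNorm T :=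
  le_trans (hT _) (entry_le_linfNorm hm T (fun i => ⟨0, hm i⟩))

lemma specNorm_mono (hm : ∀ i, 0 < m i) {S T : ((i : Fin d) → Fin (m i)) → ℝ}
    (hS : ∀ idx, 0 ≤ S idx) (hT : ∀ idx, 0 ≤ T idx) (hle : ∀ idx, S idx ≤ T idx) :
    specNorm S ≤ specNorm T := by
  refine csSup_le (specSet_nonempty hm S) ?_
  rintro r ⟨x, hx0, hx1, rfl⟩
  have h1 : tform S x ≤ tform T x := by
    refine Finset.sum_le_sum fun idx _ => mul_le_mul_of_nonneg_right (hle idx) ?_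
    exact Finset.prod_nonneg fun i _ => hx0 i (idx i)
  exact h1.trans (le_csSup (specSet_bddAbove T hT) ⟨x, hx0, hx1, rfl⟩)

lemma specNorm_smul_le (hm : ∀ i, 0 < m i) (T : ((i : Fin d) → Fin (m i)) → ℝ)
    (hT : ∀ idx, 0 ≤ T idx) {c : ℝ} (hc : 0 ≤ c) :
    specNorm (fun idx => c * T idx) ≤ c * specNorm T := by
  refine csSup_le (specSet_nonempty hm _) ?_
  rintro r ⟨x, hx0, hx1, rfl⟩
  have : tform (fun idx => c * T idx) x = c * tform T x := by
    simp [tform, Finset.mul_sum, mul_assoc]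
  rw [this]
  exact mul_le_mul_of_nonneg_left (le_csSup (specSet_bddAbove T hT) ⟨x, hx0, hx1, rfl⟩) hc

lemma key (hm : ∀ i, 0 < m i) (T : ((i : Fin d) → Fin (m i)) → ℝ)
    (hT : ∀ idx, 0 ≤ T idx) {t : ℝ} (ht : 1 < t) :
    specNorm (fun idx => T idx ^ t) ≤ linfNorm T ^ (t - 1) * specNorm T ∧
      specNorm (fun idx => T idx ^ t) ^ (1 / t) ≤ specNorm T := by
  set L := linfNorm T with hL
  set N := specNorm T with hN
  have hL0 : 0 ≤ L := linfNorm_nonneg hm T hT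
  have hN0 : 0 ≤ N := specNorm_nonneg hm T hT
  have hLN : L ≤ N := linfNorm_le_specNorm hm T hT
  have ht0 : (0:ℝ) < t := lt_trans one_pos ht
  have ht1 : 0 ≤ t - 1 := by linarith
  have hpt : ∀ idx, 0 ≤ T idx ^ t := fun idx => Real.rpow_nonneg (hT idx) t
  have hpw : ∀ idx, T idx ^ t ≤ L ^ (t - 1) * T idx := by
    intro idx
    rcases eq_or_lt_of_le (hT idx) with h | h
    · rw [← h, Real.zero_rpow (ne_of_gt ht0)]
      positivity
    · have heq : T idx ^ (t - 1) * T idx ^ (1:ℝ) = T idx ^ t := by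
        rw [← Real.rpow_add h]; norm_num
      rw [← heq, Real.rpow_one]
      exact mul_le_mul_of_nonneg_right
        (Real.rpow_le_rpow (hT idx) (entry_le_linfNorm hm T idx) ht1) (hT idx)
  have h1 : specNorm (fun idx => T idx ^ t) ≤ L ^ (t - 1) * N := by
    calc specNorm (fun idx => T idx ^ t)
        ≤ specNorm (fun idx => L ^ (t - 1) * T idx) :=
          specNorm_mono hm hpt (fun idx => mul_nonneg (Real.rpow_nonneg hL0 _) (hT idx)) hpw
      _ ≤ L ^ (t - 1) * N := specNorm_smul_le hm T hT (Real.rpow_nonneg hL0 _)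
  refine ⟨h1, ?_⟩
  have h2 : specNorm (fun idx => T idx ^ t) ≤ N ^ t := by
    rcases eq_or_lt_of_le hN0 with h | h
    · have hLz : L = 0 := le_antisymm (hLN.trans h.symm.le) hL0
      calc specNorm (fun idx => T idx ^ t) ≤ L ^ (t - 1) * N := h1
        _ = 0 := by rw [← h]; ring
        _ ≤ N ^ t := Real.rpow_nonneg hN0 t
    · calc specNorm (fun idx => T idx ^ t) ≤ L ^ (t - 1) * N := h1
        _ ≤ N ^ (t - 1) * N := mul_le_mul_of_nonneg_right
            (Real.rpow_le_rpow hL0 hLN ht1) hN0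
        _ = N ^ t := by
            nth_rewrite 2 [← Real.rpow_one N]
            rw [← Real.rpow_add h]; norm_num
  calc specNorm (fun idx => T idx ^ t) ^ (1 / t)
      ≤ (N ^ t) ^ (1 / t) :=
        Real.rpow_le_rpow (specNorm_nonneg hm _ hpt) h2 (by positivity)
    _ = N := by
        rw [← Real.rpow_mul hN0, mul_one_div_cancel (ne_of_gt ht0), Real.rpow_one]

end helpers

/-- For `t > 1`, `‖T^{∘t}‖_∞ ≤ ‖T‖_{ℓ∞}^{t-1} ‖T‖_∞`, hence
`‖T^{∘t}‖_∞^{1/t} ≤ ‖T‖_∞` and `s ↦ ‖T^{∘s}‖_∞^{1/s}` is nonincreasing on `(0,∞)`. -/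
theorem spectral_norm_power_monotone
    (d : ℕ) (m : Fin d → ℕ) (hm : ∀ i, 0 < m i)
    (T : ((i : Fin d) → Fin (m i)) → ℝ) (hT : ∀ idx, 0 ≤ T idx) :
    (∀ t : ℝ, 1 < t →
      specNorm (fun idx => T idx ^ t) ≤ linfNorm T ^ (t - 1) * specNorm T ∧
      specNorm (fun idx => T idx ^ t) ^ (1 / t) ≤ specNorm T) ∧
    (∀ s₁ s₂ : ℝ, 0 < s₁ → s₁ ≤ s₂ →
      specNorm (fun idx => T idx ^ s₂) ^ (1 / s₂) ≤
        specNorm (fun idx => T idx ^ s₁) ^ (1 / s₁)) := by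
  refine ⟨fun t ht => key hm T hT ht, fun s₁ s₂ hs₁ hs₁₂ => ?_⟩
  rcases eq_or_lt_of_le hs₁₂ with rfl | hlt
  · exact le_rfl
  · set S := fun idx => T idx ^ s₁ with hS
    have hS0 : ∀ idx, 0 ≤ S idx := fun idx => Real.rpow_nonneg (hT idx) _
    have ht : 1 < s₂ / s₁ := (one_lt_div hs₁).mpr hlt
    have hkey := (key hm S hS0 ht).2
    have hSt : (fun idx => S idx ^ (s₂ / s₁)) = fun idx => T idx ^ s₂ := by
      funext idx
      rw [hS, ← Real.rpow_mul (hT idx), mul_div_cancel₀ _ (ne_of_gt hs₁)]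
    rw [hSt] at hkey
    have hX : 0 ≤ specNorm (fun idx => T idx ^ s₂) :=
      specNorm_nonneg hm _ (fun idx => Real.rpow_nonneg (hT idx) _)
    have := Real.rpow_le_rpow (Real.rpow_nonneg hX _) hkey (le_of_lt (one_div_pos.mpr hs₁))
    rwa [← Real.rpow_mul hX, one_div_mul_one_div, div_mul_cancel₀ _ (ne_of_gt hs₁)] at this
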